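/- Let λ be a nonempty Young diagram and N ≥ |λ|. Then f^{λ,N} ≥ f^λ · C(N−1, |λ|−1), where C(a,b) denotes the binomial coefficient. -/
import Mathlib


open Finset

/-- A Young diagram: a finite set of cells `(r,c)` with `r,c ≥ 1`, closed under
moving weakly north and west (staying in the positive quadrant). -/
def IsYoung (μ : Finset (ℕ × ℕ)) : Prop :=
  ∀ p ∈ μ, 1 ≤ p.1 ∧ 1 ≤ p.2 ∧
    ∀ r' c' : ℕ, 1 ≤ r' → r' ≤ p.1 → 1 ≤ c' → c' ≤ p.2 → (r', c') ∈ μ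

/-- The staircase `δ^k = {(r,c) : r,c ≥ 1, r + c ≤ k + 1}`. -/
def staircase (k : ℕ) : Finset (ℕ × ℕ) :=
  (Finset.Icc 1 k ×ˢ Finset.Icc 1 k).filter (fun p => p.1 + p.2 ≤ k + 1)

/-- `sv μ` is the largest `k` with `staircase k ⊆ μ` (it is `0` for `μ = ∅`). -/
def sv (μ : Finset (ℕ × ℕ)) : ℕ :=
  Nat.findGreatest (fun k => staircase k ⊆ μ) μ.card

/-- The cells of `A` that are the unique element of `A` weakly northwest of themselves. -/
def NW (A : Finset (ℕ × ℕ)) : Finset (ℕ × ℕ) :=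
  A.filter (fun p => ∀ q ∈ A, q.1 ≤ p.1 → q.2 ≤ p.2 → q = p)

/-- The hook of a cell `p` in `μ`. -/
def hook (μ : Finset (ℕ × ℕ)) (p : ℕ × ℕ) : Finset (ℕ × ℕ) :=
  μ.filter (fun q => (q.1 = p.1 ∧ p.2 < q.2) ∨ (q.2 = p.2 ∧ p.1 < q.1))

/-- The maximum of a finite set of naturals (`0` for the empty set). -/
def maxv (s : Finset ℕ) : ℕ := s.sup id

/-- An `N⟨k⟩`-standard set-valued pre-tableau of shape `μ`. -/
structure IsPreSVT (μ : Finset (ℕ × ℕ)) (N k : ℕ) (S : ℕ × ℕ → Finset ℕ) : Prop where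
  support : ∀ p, p ∉ μ → S p = ∅
  subset : ∀ p ∈ μ, S p ⊆ Finset.Icc (k + 1) N
  exactlyOnce : ∀ i ∈ Finset.Icc (k + 1) N, ∃! p, p ∈ μ ∧ i ∈ S p
  down_ne : ∀ r c : ℕ, (r, c) ∈ μ → (r + 1, c) ∈ μ →
    (S (r, c)).Nonempty → (S (r + 1, c)).Nonempty
  right_ne : ∀ r c : ℕ, (r, c) ∈ μ → (r, c + 1) ∈ μ →
    (S (r, c)).Nonempty → (S (r, c + 1)).Nonempty
  down_lt : ∀ r c : ℕ, (r, c) ∈ μ → (r + 1, c) ∈ μ →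
    ∀ a ∈ S (r, c), ∀ b ∈ S (r + 1, c), a < b
  right_lt : ∀ r c : ℕ, (r, c) ∈ μ → (r, c + 1) ∈ μ →
    ∀ a ∈ S (r, c), ∀ b ∈ S (r, c + 1), a < b
  empties : (μ.filter (fun p => S p = ∅)).card ≤ k

/-- An `N`-standard set-valued tableau of shape `μ`: every cell gets a nonempty set,
each value `1,…,N` appears exactly once, rows and columns are strictly increasing. -/
def IsSVT (μ : Finset (ℕ × ℕ)) (N : ℕ) (T : ℕ × ℕ → Finset ℕ) : Prop :=
  IsPreSVT μ N 0 T

/-- The set of `N`-standard set-valued tableaux of shape `μ` containing `S`. -/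
def SVTset (μ : Finset (ℕ × ℕ)) (N : ℕ) (S : ℕ × ℕ → Finset ℕ) :
    Set (ℕ × ℕ → Finset ℕ) :=
  {T | IsSVT μ N T ∧ ∀ p, S p ⊆ T p}

/-- `f^{μ,N,S}`, the number of `N`-standard set-valued tableaux of shape `μ` containing `S`. -/
noncomputable def fSVT (μ : Finset (ℕ × ℕ)) (N : ℕ) (S : ℕ × ℕ → Finset ℕ) : ℕ :=
  (SVTset μ N S).ncard

/-- `f^{μ,N}`, the number of `N`-standard set-valued tableaux of shape `μ`. -/
noncomputable def fSVTall (μ : Finset (ℕ × ℕ)) (N : ℕ) : ℕ :=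
  {T : ℕ × ℕ → Finset ℕ | IsSVT μ N T}.ncard

/-- A standard Young tableau of shape `μ`: a bijection from the cells of `μ`
to `{1,…,|μ|}` increasing along rows and columns (valued `0` off `μ`). -/
structure IsSYT (μ : Finset (ℕ × ℕ)) (F : ℕ × ℕ → ℕ) : Prop where
  support : ∀ p, p ∉ μ → F p = 0
  mem_range : ∀ p ∈ μ, F p ∈ Finset.Icc 1 μ.card
  exactlyOnce : ∀ i ∈ Finset.Icc 1 μ.card, ∃! p, p ∈ μ ∧ F p = i
  down_lt : ∀ r c : ℕ, (r, c) ∈ μ → (r + 1, c) ∈ μ → F (r, c) < F (r + 1, c)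
  right_lt : ∀ r c : ℕ, (r, c) ∈ μ → (r, c + 1) ∈ μ → F (r, c) < F (r, c + 1)

/-- `f^μ`, the number of standard Young tableaux of shape `μ`. -/
noncomputable def fSYT (μ : Finset (ℕ × ℕ)) : ℕ :=
  {F : ℕ × ℕ → ℕ | IsSYT μ F}.ncard


def cnt (B : Finset ℕ) (i : ℕ) : ℕ := (B.filter (· ≤ i)).card

lemma cnt_mono (B : Finset ℕ) {i j : ℕ} (h : i ≤ j) : cnt B i ≤ cnt B j := by
  apply Finset.card_le_card
  intro x hx
  rw [Finset.mem_filter] at *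
  exact ⟨hx.1, le_trans hx.2 h⟩

lemma cnt_strict {B : Finset ℕ} {b j : ℕ} (hb : b ∈ B) (h : j < b) :
    cnt B j < cnt B b := by
  apply Finset.card_lt_card
  constructor
  · intro x hx
    rw [Finset.mem_filter] at *
    exact ⟨hx.1, le_trans hx.2 h.le⟩
  · intro hsub
    have := hsub (Finset.mem_filter.mpr ⟨hb, le_refl b⟩)
    exact absurd (Finset.mem_filter.mp this).2 (not_le.mpr h)

lemma cnt_le_card (B : Finset ℕ) (i : ℕ) : cnt B i ≤ B.card :=
  Finset.card_le_card (Finset.filter_subset _ _)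

lemma cnt_pos {B : Finset ℕ} {i : ℕ} (h1 : 1 ∈ B) (hi : 1 ≤ i) : 1 ≤ cnt B i :=
  Finset.card_pos.mpr ⟨1, Finset.mem_filter.mpr ⟨h1, hi⟩⟩

lemma cnt_mem_pos {B : Finset ℕ} {b : ℕ} (hb : b ∈ B) : 1 ≤ cnt B b :=
  Finset.card_pos.mpr ⟨b, Finset.mem_filter.mpr ⟨hb, le_refl b⟩⟩

lemma cnt_surj {B : Finset ℕ} {k : ℕ} (hk : k ∈ Finset.Icc 1 B.card) :
    ∃ b ∈ B, cnt B b = k := by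
  have hinj : Set.InjOn (cnt B) B := by
    intro a ha b hb hab
    by_contra hne
    rcases lt_or_gt_of_ne hne with h | h
    · exact absurd hab (Nat.ne_of_lt (cnt_strict hb h))
    · exact absurd hab.symm (Nat.ne_of_lt (cnt_strict ha h))
  have hsub : B.image (cnt B) ⊆ Finset.Icc 1 B.card := by
    intro x hx
    rcases Finset.mem_image.mp hx with ⟨b, hb, rfl⟩
    exact Finset.mem_Icc.mpr ⟨cnt_mem_pos hb, cnt_le_card B b⟩
  have hcard : (B.image (cnt B)).card = B.card := Finset.card_image_of_injOn hinj
  have heq : B.image (cnt B) = Finset.Icc 1 B.card := by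
    apply Finset.eq_of_subset_of_card_le hsub
    rw [hcard, Nat.card_Icc]; omega
  rw [← heq] at hk
  rcases Finset.mem_image.mp hk with ⟨b, hb, hbk⟩
  exact ⟨b, hb, hbk⟩

lemma cnt_pred {B : Finset ℕ} {b : ℕ} (hb : b ∉ B) (h2 : 1 ≤ b) :
    cnt B (b - 1) = cnt B b := by
  unfold cnt
  congr 1
  apply Finset.filter_congr
  intro x hx
  constructor
  · intro h; omega
  · intro h
    rcases eq_or_lt_of_le h with rfl | h
    · exact absurd hx hb
    · omega

/-- The tableau assembled from an SYT `F` and a set `B` of "extra minima". -/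
noncomputable def Phi (lam : Finset (ℕ × ℕ)) (N : ℕ) (F : ℕ × ℕ → ℕ) (B : Finset ℕ) :
    ℕ × ℕ → Finset ℕ :=
  fun p => if p ∈ lam then (Finset.Icc 1 N).filter (fun i => cnt (insert 1 B) i = F p) else ∅

section PhiFacts

variable {lam : Finset (ℕ × ℕ)} {N : ℕ} {F : ℕ × ℕ → ℕ} {B : Finset ℕ}
  (hn1 : 1 ≤ lam.card) (hN : lam.card ≤ N) (hF : IsSYT lam F)
  (hBs : B ⊆ Finset.Icc 2 N) (hBc : B.card = lam.card - 1)

include hBs in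
lemma one_not_mem : 1 ∉ B := by
  intro h
  have := Finset.mem_Icc.mp (hBs h)
  omega

include hn1 hBs hBc in
lemma C_card : (insert 1 B).card = lam.card := by
  rw [Finset.card_insert_of_notMem (one_not_mem hBs)]
  omega

include hn1 hN hBs in
lemma C_sub : insert 1 B ⊆ Finset.Icc 1 N := by
  intro x hx
  rcases Finset.mem_insert.mp hx with rfl | hx
  · exact Finset.mem_Icc.mpr ⟨le_refl 1, by omega⟩
  · have := Finset.mem_Icc.mp (hBs hx)
    exact Finset.mem_Icc.mpr ⟨by omega, this.2⟩

include hn1 hN hF hBs hBc in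
lemma Phi_cell_nonempty {p : ℕ × ℕ} (hp : p ∈ lam) : (Phi lam N F B p).Nonempty := by
  have hk : F p ∈ Finset.Icc 1 (insert 1 B).card := by
    rw [C_card hn1 hBs hBc]; exact hF.mem_range p hp
  rcases cnt_surj hk with ⟨b, hb, hcb⟩
  exact ⟨b, by
    unfold Phi
    rw [if_pos hp, Finset.mem_filter]
    exact ⟨C_sub hn1 hN hBs hb, hcb⟩⟩

set_option linter.unusedSectionVars false in
include hn1 hN hF hBs hBc in
lemma Phi_mem {p : ℕ × ℕ} (hp : p ∈ lam) {i : ℕ} :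
    i ∈ Phi lam N F B p ↔ i ∈ Finset.Icc 1 N ∧ cnt (insert 1 B) i = F p := by
  unfold Phi
  rw [if_pos hp, Finset.mem_filter]

include hn1 hN hF hBs hBc in
lemma Phi_isSVT : IsSVT lam N (Phi lam N F B) := by
  have hmem := fun {p} hp {i} => Phi_mem (F := F) hn1 hN hF hBs hBc (p := p) hp (i := i)
  refine ⟨?_, ?_, ?_, ?_, ?_, ?_, ?_, ?_⟩
  · intro p hp; unfold Phi; rw [if_neg hp]
  · intro p hp i hi
    exact ((hmem hp).mp hi).1
  · intro i hi
    have hi' : i ∈ Finset.Icc 1 N := hi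
    have h1 : 1 ≤ i := (Finset.mem_Icc.mp hi').1
    have hc : cnt (insert 1 B) i ∈ Finset.Icc 1 lam.card := by
      refine Finset.mem_Icc.mpr ⟨cnt_pos (Finset.mem_insert_self 1 B) h1, ?_⟩
      calc cnt (insert 1 B) i ≤ (insert 1 B).card := cnt_le_card _ _
        _ = lam.card := C_card hn1 hBs hBc
    rcases hF.exactlyOnce _ hc with ⟨p, ⟨hp, hFp⟩, huniq⟩
    refine ⟨p, ⟨hp, (hmem hp).mpr ⟨hi', hFp.symm⟩⟩, ?_⟩
    rintro q ⟨hq, hiq⟩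
    exact huniq q ⟨hq, ((hmem hq).mp hiq).2.symm⟩
  · intro r c h1 h2 _
    exact Phi_cell_nonempty hn1 hN hF hBs hBc h2
  · intro r c h1 h2 _
    exact Phi_cell_nonempty hn1 hN hF hBs hBc h2
  · intro r c h1 h2 a ha b hb
    have hlt : cnt (insert 1 B) a < cnt (insert 1 B) b := by
      rw [((hmem h1).mp ha).2, ((hmem h2).mp hb).2]
      exact hF.down_lt r c h1 h2
    by_contra hab
    exact absurd (cnt_mono (insert 1 B) (not_lt.mp hab)) (not_le.mpr hlt)
  · intro r c h1 h2 a ha b hb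
    have hlt : cnt (insert 1 B) a < cnt (insert 1 B) b := by
      rw [((hmem h1).mp ha).2, ((hmem h2).mp hb).2]
      exact hF.right_lt r c h1 h2
    by_contra hab
    exact absurd (cnt_mono (insert 1 B) (not_lt.mp hab)) (not_le.mpr hlt)
  · have : lam.filter (fun p => Phi lam N F B p = ∅) = ∅ := by
      apply Finset.filter_eq_empty_iff.mpr
      intro p hp
      exact Finset.nonempty_iff_ne_empty.mp (Phi_cell_nonempty hn1 hN hF hBs hBc hp)
    rw [this]; simp

include hn1 hN hF hBs hBc in
/-- The set `insert 1 B` is recoverable from the tableau as the set of cell minima. -/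
lemma Phi_min_char {b : ℕ} :
    b ∈ insert 1 B ↔
      ∃ p ∈ lam, b ∈ Phi lam N F B p ∧ ∀ j ∈ Phi lam N F B p, b ≤ j := by
  have hmem := fun {p} hp {i} => Phi_mem (F := F) hn1 hN hF hBs hBc (p := p) hp (i := i)
  constructor
  · intro hb
    have hc : cnt (insert 1 B) b ∈ Finset.Icc 1 lam.card := by
      refine Finset.mem_Icc.mpr ⟨cnt_mem_pos hb, ?_⟩
      calc cnt (insert 1 B) b ≤ (insert 1 B).card := cnt_le_card _ _
        _ = lam.card := C_card hn1 hBs hBc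
    rcases hF.exactlyOnce _ hc with ⟨p, ⟨hp, hFp⟩, _⟩
    refine ⟨p, hp, (hmem hp).mpr ⟨C_sub hn1 hN hBs hb, hFp.symm⟩, ?_⟩
    intro j hj
    by_contra hjb
    have hj' := ((hmem hp).mp hj).2
    have := cnt_strict hb (not_le.mp hjb)
    omega
  · rintro ⟨p, hp, hbT, hminT⟩
    by_contra hbC
    obtain ⟨hbI, hcb⟩ := (hmem hp).mp hbT
    have h1b : 1 ≤ b := (Finset.mem_Icc.mp hbI).1
    have h2b : 2 ≤ b := by
      rcases Nat.lt_or_ge b 2 with h | h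
      · interval_cases b
        · exact absurd (Finset.mem_insert_self 1 B) hbC
      · exact h
    have hpred : cnt (insert 1 B) (b - 1) = F p := by
      rw [cnt_pred hbC h1b]; exact hcb
    have hbI' : b - 1 ∈ Finset.Icc 1 N := by
      have := Finset.mem_Icc.mp hbI
      exact Finset.mem_Icc.mpr ⟨by omega, by omega⟩
    have : b - 1 ∈ Phi lam N F B p := (hmem hp).mpr ⟨hbI', hpred⟩
    have := hminT _ this
    omega

end PhiFacts

lemma SVT_finite (lam : Finset (ℕ × ℕ)) (N : ℕ) :
    {T : ℕ × ℕ → Finset ℕ | IsSVT lam N T}.Finite := by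
  set f : (ℕ × ℕ → Finset ℕ) → Finset ((ℕ × ℕ) × ℕ) :=
    fun T => (lam ×ˢ Finset.Icc 1 N).filter (fun q => q.2 ∈ T q.1) with hf
  apply Set.Finite.of_finite_image (f := f)
  · apply Set.Finite.subset ((lam ×ˢ Finset.Icc 1 N).powerset : Finset _).finite_toSet
    rintro x ⟨T, _, rfl⟩
    exact Finset.mem_coe.mpr (Finset.mem_powerset.mpr (Finset.filter_subset _ _))
  · intro T hT T' hT' heq
    funext p
    by_cases hp : p ∈ lam
    · ext i
      by_cases hi : i ∈ Finset.Icc 1 N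
      · have h1 : i ∈ T p ↔ (p, i) ∈ f T := by
          rw [hf]; simp only [Finset.mem_filter, Finset.mem_product]
          exact ⟨fun h => ⟨⟨hp, hi⟩, h⟩, fun h => h.2⟩
        have h2 : i ∈ T' p ↔ (p, i) ∈ f T' := by
          rw [hf]; simp only [Finset.mem_filter, Finset.mem_product]
          exact ⟨fun h => ⟨⟨hp, hi⟩, h⟩, fun h => h.2⟩
        rw [h1, h2, heq]
      · constructor
        · intro h; exact absurd (hT.subset p hp h) hi
        · intro h; exact absurd (hT'.subset p hp h) hi
    · rw [hT.support p hp, hT'.support p hp]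

theorem fSVT_lower_bound' (lam : Finset (ℕ × ℕ))
    (hne : lam.Nonempty) (N : ℕ) (hN : lam.card ≤ N) :
    fSYT lam * Nat.choose (N - 1) (lam.card - 1) ≤ fSVTall lam N := by
  have hn1 : 1 ≤ lam.card := Finset.card_pos.mpr hne
  set D : Finset (Finset ℕ) := (Finset.Icc 2 N).powersetCard (lam.card - 1) with hD
  have hDmem : ∀ B ∈ D, B ⊆ Finset.Icc 2 N ∧ B.card = lam.card - 1 := by
    intro B hB
    exact Finset.mem_powersetCard.mp hB
  set s : Set ((ℕ × ℕ → ℕ) × Finset ℕ) := {F | IsSYT lam F} ×ˢ (↑D : Set (Finset ℕ)) with hs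
  set f : (ℕ × ℕ → ℕ) × Finset ℕ → (ℕ × ℕ → Finset ℕ) :=
    fun FB => Phi lam N FB.1 FB.2 with hfdef
  have himg : f '' s ⊆ {T | IsSVT lam N T} := by
    rintro x ⟨⟨F, B⟩, hFB, rfl⟩
    obtain ⟨hF, hB⟩ := hFB
    obtain ⟨hBs, hBc⟩ := hDmem B hB
    exact Phi_isSVT hn1 hN hF hBs hBc
  have hinj : Set.InjOn f s := by
    rintro ⟨F, B⟩ hFB ⟨F', B'⟩ hFB' heq
    obtain ⟨hF, hB⟩ := hFB
    obtain ⟨hF', hB'⟩ := hFB'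
    obtain ⟨hBs, hBc⟩ := hDmem B hB
    obtain ⟨hBs', hBc'⟩ := hDmem B' hB'
    have hCeq : insert 1 B = insert 1 B' := by
      ext b
      rw [Phi_min_char hn1 hN hF hBs hBc, Phi_min_char hn1 hN hF' hBs' hBc']
      simp only [hfdef] at heq
      rw [show Phi lam N F B = Phi lam N F' B' from heq]
    have hBeq : B = B' := by
      have e1 : B = (insert 1 B).erase 1 :=
        (Finset.erase_insert (one_not_mem hBs)).symm
      have e2 : B' = (insert 1 B').erase 1 :=
        (Finset.erase_insert (one_not_mem hBs')).symm
      rw [e1, e2, hCeq]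
    subst hBeq
    have hFeq : F = F' := by
      funext p
      by_cases hp : p ∈ lam
      · rcases Phi_cell_nonempty hn1 hN hF hBs hBc hp with ⟨i, hi⟩
        have h1 : cnt (insert 1 B) i = F p :=
          ((Phi_mem hn1 hN hF hBs hBc hp).mp hi).2
        have hi' : i ∈ Phi lam N F' B p := by
          rw [← show Phi lam N F B = Phi lam N F' B from heq]; exact hi
        have h2 : cnt (insert 1 B) i = F' p :=
          ((Phi_mem hn1 hN hF' hBs' hBc' hp).mp hi').2
        rw [← h1, ← h2]
      · exact (hF.support p hp).trans (hF'.support p hp).symm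
    rw [hFeq]
  have hcard : s.ncard = fSYT lam * Nat.choose (N - 1) (lam.card - 1) := by
    have h1 : s.ncard = {F | IsSYT lam F}.ncard * (↑D : Set (Finset ℕ)).ncard := by
      rw [← Nat.card_coe_set_eq, ← Nat.card_coe_set_eq, ← Nat.card_coe_set_eq]
      rw [Nat.card_congr (Equiv.Set.prod _ _), Nat.card_prod]
    rw [h1, Set.ncard_coe_finset, hD, Finset.card_powersetCard, Nat.card_Icc]
    rfl
  calc fSYT lam * Nat.choose (N - 1) (lam.card - 1) = s.ncard := hcard.symm
    _ = (f '' s).ncard := (Set.ncard_image_of_injOn hinj).symm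
    _ ≤ {T | IsSVT lam N T}.ncard := Set.ncard_le_ncard himg (SVT_finite lam N)
    _ = fSVTall lam N := rfl

/-- For nonempty `λ` and `N ≥ |λ|`,
`f^{λ,N} ≥ f^λ · C(N−1, |λ|−1)`. -/
theorem fSVT_lower_bound (lam : Finset (ℕ × ℕ)) (hY : IsYoung lam)
    (hne : lam.Nonempty) (N : ℕ) (hN : lam.card ≤ N) :
    fSYT lam * Nat.choose (N - 1) (lam.card - 1) ≤ fSVTall lam N := by
  exact fSVT_lower_bound' lam hne N hN
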